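/- (Extended second Frobenius–Stickelberger formula.) For every integer λ ≥ 1, every natural number n, and every triple (u, v, w) of C^n complex-valued functions on an interval J with u nowhere vanishing, one has Σ_{p=0}^{n} C(n,p) · ((-1)^p/(p+λ)) · u^{-p-λ} · D^{n-p}(v · D^p(u^{p+λ} w)) = Σ_{p=0}^{n} C(n,p) · ((-1)^p/(p+λ)) · D^{n-p}(v · D^p w). -/

import Mathlib

open scoped Nat BigOperators
open Finset

private lemma nat_cast_le_wt {a b : ℕ} (h : a ≤ b) : (a : WithTop ℕ∞) ≤ (b : WithTop ℕ∞) := by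
  exact_mod_cast h

private lemma one_le_wt (m : ℕ) : (1 : WithTop ℕ∞) ≤ ((m+1 : ℕ) : WithTop ℕ∞) := by
  exact_mod_cast Nat.succ_le_succ (Nat.zero_le m)

private lemma leibniz_comb (N : ℕ) (F G : ℕ → ℂ) :
    ∑ j ∈ range (N+1), (N.choose j : ℂ) * F (j+1) * G (N-j)
      + ∑ j ∈ range (N+1), (N.choose j : ℂ) * F j * G (N+1-j)
    = ∑ j ∈ range (N+2), ((N+1).choose j : ℂ) * F j * G (N+1-j) := by
  rw [Finset.sum_range_succ' (fun j => ((N+1).choose j : ℂ) * F j * G (N+1-j)) (N+1)]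
  simp only [Nat.add_sub_add_right]
  have expand : ∀ j ∈ range (N+1), ((N+1).choose (j+1) : ℂ) * F (j+1) * G (N-j)
      = (N.choose j : ℂ) * F (j+1) * G (N-j) + (N.choose (j+1) : ℂ) * F (j+1) * G (N-j) := by
    intro j _; rw [Nat.choose_succ_succ' N j]; push_cast; ring
  rw [Finset.sum_congr rfl expand, Finset.sum_add_distrib]
  have h1 := Finset.sum_range_succ' (fun j => (N.choose j : ℂ) * F j * G (N+1-j)) (N+1)
  have h2 := Finset.sum_range_succ (fun j => (N.choose j : ℂ) * F j * G (N+1-j)) (N+1)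
  simp only [Nat.add_sub_add_right, Nat.choose_succ_self, Nat.cast_zero, zero_mul, add_zero,
    Nat.choose_zero_right, Nat.cast_one, one_mul] at h1 h2 ⊢
  linear_combination h1 - h2

private lemma sum_FD (m : ℕ) (f : ℕ → ℂ) :
    ∑ p ∈ range (m+2), (-1:ℂ)^p * ((m+1).choose p : ℂ) * f p
      = ∑ p ∈ range (m+1), (-1:ℂ)^p * (m.choose p : ℂ) * (f p - f (p+1)) := by
  have h0 := Finset.sum_range_succ' (fun p => (-1:ℂ)^p * ((m+1).choose p : ℂ) * f p) (m+1)
  have e1 : ∀ p ∈ range (m+1), (-1:ℂ)^(p+1) * ((m+1).choose (p+1) : ℂ) * f (p+1)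
      = -((-1:ℂ)^p * (m.choose p : ℂ) * f (p+1)) - (-1:ℂ)^p * (m.choose (p+1) : ℂ) * f (p+1) := by
    intro p _
    rw [Nat.choose_succ_succ' m p]
    push_cast
    ring
  have h1 := Finset.sum_range_succ' (fun p => (-1:ℂ)^p * (m.choose p : ℂ) * f p) (m+1)
  have e4 : ∀ p ∈ range (m+1), (-1:ℂ)^(p+1) * (m.choose (p+1) : ℂ) * f (p+1)
      = -((-1:ℂ)^p * (m.choose (p+1) : ℂ) * f (p+1)) := by
    intro p _; ring
  have h2 := Finset.sum_range_succ (fun p => (-1:ℂ)^p * (m.choose p : ℂ) * f p) (m+1)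
  rw [Finset.sum_congr rfl e1] at h0
  rw [Finset.sum_congr rfl e4] at h1
  have e3 : ∀ p ∈ range (m+1), (-1:ℂ)^p * (m.choose p : ℂ) * (f p - f (p+1))
      = (-1:ℂ)^p * (m.choose p : ℂ) * f p - (-1:ℂ)^p * (m.choose p : ℂ) * f (p+1) := by
    intro p _; ring
  rw [Finset.sum_congr rfl e3]
  simp only [Nat.choose_succ_self, Nat.cast_zero, Nat.choose_zero_right, Nat.cast_one,
    pow_zero, one_mul, mul_zero, zero_mul, add_zero, mul_one, Finset.sum_sub_distrib,
    Finset.sum_neg_distrib] at h0 h1 h2 ⊢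
  linear_combination h0 - h1 + h2

private lemma altsum_choose (m : ℕ) (hm : m ≠ 0) :
    ∑ p ∈ range (m+1), (-1:ℂ)^p * (m.choose p : ℂ) = 0 := by
  have h := Int.alternating_sum_range_choose_of_ne hm
  have h2 := congrArg (fun z : ℤ => (z : ℂ)) h
  push_cast at h2
  simpa using h2

private lemma altsum (m : ℕ) : ∀ (j : ℕ), j < m → ∀ (μ : ℕ),
    ∑ p ∈ range (m+1), (-1:ℂ)^p * (m.choose p : ℂ) * ((p+μ).choose j : ℂ) = 0 := by
  induction m with
  | zero => intro j hj; omega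
  | succ m IH =>
    intro j hj μ
    match j with
    | 0 =>
      simp only [Nat.choose_zero_right, Nat.cast_one, mul_one]
      exact altsum_choose (m+1) (Nat.succ_ne_zero m)
    | j'+1 =>
      rw [sum_FD m (fun p => ((p+μ).choose (j'+1) : ℂ))]
      have e : ∀ p ∈ range (m+1), (-1:ℂ)^p * (m.choose p : ℂ) *
            (((p+μ).choose (j'+1) : ℂ) - ((p+1+μ).choose (j'+1) : ℂ))
          = -((-1:ℂ)^p * (m.choose p : ℂ) * ((p+μ).choose j' : ℂ)) := by
        intro p _
        have h5 : (p+1+μ).choose (j'+1) = (p+μ).choose j' + (p+μ).choose (j'+1) := by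
          have h6 := Nat.choose_succ_succ' (p+μ) j'
          rw [← h6]
          congr 1
          omega
        rw [h5]
        push_cast
        ring
      rw [Finset.sum_congr rfl e, Finset.sum_neg_distrib]
      rw [IH j' (by omega) μ]
      simp

private lemma keyC (m l k : ℕ) (hl : 1 ≤ l) (hk1 : 1 ≤ k) (hkm : k ≤ m) :
    ∑ p ∈ range (m+1), (m.choose p : ℂ) * ((-1:ℂ)^p / ((p:ℂ) + l)) * ((p+l).choose k : ℂ) = 0 := by
  obtain ⟨k', rfl⟩ : ∃ k', k = k' + 1 := ⟨k - 1, by omega⟩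
  obtain ⟨l', rfl⟩ : ∃ l', l = l' + 1 := ⟨l - 1, by omega⟩
  have e : ∀ p ∈ range (m+1), (m.choose p : ℂ) * ((-1:ℂ)^p / ((p:ℂ) + ((l'+1 : ℕ):ℂ))) *
        (((p+(l'+1)).choose (k'+1) : ℕ) : ℂ)
      = (1/((k':ℂ)+1)) * ((-1:ℂ)^p * (m.choose p : ℂ) * ((p+l').choose k' : ℂ)) := by
    intro p _
    have hc : ((p+l'+1 : ℕ) : ℂ) * (((p+l').choose k' : ℕ) : ℂ)
        = (((p+l'+1).choose (k'+1) : ℕ) : ℂ) * ((k'+1 : ℕ) : ℂ) := by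
      exact_mod_cast congrArg (fun z : ℕ => (z : ℂ)) (Nat.add_one_mul_choose_eq (p+l') k')
    have hp0 : ((p:ℂ) + ((l':ℂ)+1)) ≠ 0 := by
      have h : ((p:ℂ) + ((l':ℂ)+1)) = ((p+l'+1 : ℕ) : ℂ) := by push_cast; ring
      rw [h]; exact Nat.cast_ne_zero.mpr (by omega)
    have hk0 : ((k':ℂ)+1) ≠ 0 := by
      have h : ((k':ℂ)+1) = ((k'+1 : ℕ) : ℂ) := by push_cast; ring
      rw [h]; exact Nat.cast_ne_zero.mpr (by omega)
    have e2 : ((p+(l'+1) : ℕ)) = (p+l'+1 : ℕ) := by omega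
    rw [e2]
    push_cast at hc ⊢
    field_simp
    linear_combination (-((m.choose p : ℂ))) * hc
  rw [Finset.sum_congr rfl e, ← Finset.mul_sum]
  rw [altsum m k' (by omega) l']
  simp

private lemma choose_swap {n p j : ℕ} (hp : p ≤ n) (hj : j ≤ n) :
    n.choose p * (n-p).choose j = n.choose j * (n-j).choose p := by
  by_cases h : p + j ≤ n
  · have h1 := Nat.choose_mul (n:=n) (show j ≤ p+j by omega)
    have h2 := Nat.choose_mul (n:=n) (show p ≤ p+j by omega)
    have e1 : p + j - j = p := by omega
    have e2 : p + j - p = j := by omega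
    rw [e1] at h1
    rw [e2] at h2
    have hsymm : (p+j).choose j = (p+j).choose p := by
      have := Nat.choose_symm (show j ≤ p+j by omega)
      rw [e1] at this
      exact this.symm
    rw [hsymm] at h1
    omega
  · rw [Nat.choose_eq_zero_of_lt (show n - p < j by omega),
      Nat.choose_eq_zero_of_lt (show n - j < p by omega)]
    simp

section helpers
variable {J : Set ℝ} (hJuniq : UniqueDiffOn ℝ J)
include hJuniq

private lemma idw_idw (b : ℕ) : ∀ (a : ℕ) (f : ℝ → ℂ) {t : ℝ}, t ∈ J →
    iteratedDerivWithin a (iteratedDerivWithin b f J) J t = iteratedDerivWithin (a + b) f J t := by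
  induction b with
  | zero => intro a f t ht; rw [iteratedDerivWithin_zero]; rfl
  | succ b IH =>
    intro a f t ht
    have h1 : Set.EqOn (iteratedDerivWithin (b+1) f J) (iteratedDerivWithin b (derivWithin f J) J) J :=
      fun x _ => congrFun iteratedDerivWithin_succ' x
    have h2 : a + (b+1) = (a+b)+1 := rfl
    rw [iteratedDerivWithin_congr h1 ht, IH a (derivWithin f J) ht, h2,
      iteratedDerivWithin_succ']

private lemma cdo_idw (p : ℕ) : ∀ {m : ℕ} {f : ℝ → ℂ}, ContDiffOn ℝ (↑(m + p)) f J →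
    ContDiffOn ℝ (↑m) (iteratedDerivWithin p f J) J := by
  induction p with
  | zero => intro m f hf; simpa [iteratedDerivWithin_zero] using hf
  | succ p IH =>
    intro m f hf
    have hf' : ContDiffOn ℝ (↑(m+p)) (derivWithin f J) J := by
      apply hf.derivWithin hJuniq
      exact le_of_eq (by push_cast; ring)
    exact (IH hf').congr (fun x _ => congrFun iteratedDerivWithin_succ' x)

private lemma idw_sum {ι : Type*} (s : Finset ι) (f : ι → ℝ → ℂ) {m : ℕ} {t : ℝ} (ht : t ∈ J)
    (h : ∀ i ∈ s, ContDiffOn ℝ (↑m) (f i) J) :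
    iteratedDerivWithin m (fun x => ∑ i ∈ s, f i x) J t
      = ∑ i ∈ s, iteratedDerivWithin m (f i) J t := by
  simp only [iteratedDerivWithin_eq_iteratedFDerivWithin]
  rw [show (fun x => ∑ i ∈ s, f i x) = ∑ i ∈ s, f i by ext; simp,
    iteratedFDerivWithin_sum_apply hJuniq ht (fun j hj => h j hj t ht)]
  simp

omit hJuniq in
private lemma hasDW_pow {c : ℝ → ℂ} {c' : ℂ} {x : ℝ} (hc : HasDerivWithinAt c c' J x) :
    ∀ k : ℕ, HasDerivWithinAt (fun y => c y ^ (k+1)) (((k:ℂ)+1) * c x ^ k * c') J x := by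
  intro k
  induction k with
  | zero => simpa using hc
  | succ k IH =>
    have h := IH.fun_mul hc
    have e : (fun y => c y ^ (k+1) * c y) = fun y => c y ^ (k+2) := by
      funext y; rw [← pow_succ]
    rw [e] at h
    refine h.congr_deriv ?_
    push_cast
    ring

private lemma idw_vanish : ∀ (m : ℕ) (k : ℕ) (g W : ℝ → ℂ), m < k → ContDiffOn ℝ (↑m) g J →
    ContDiffOn ℝ (↑m) W J → ∀ {t₀ : ℝ}, t₀ ∈ J → g t₀ = 0 →
    iteratedDerivWithin m (fun t => g t ^ k * W t) J t₀ = 0 := by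
  intro m
  induction m with
  | zero =>
    intro k g W hmk hg hW t₀ ht₀ hg0
    rw [iteratedDerivWithin_zero]
    simp [hg0, zero_pow (by omega : k ≠ 0)]
  | succ m IH =>
    intro k g W hmk hg hW t₀ ht₀ hg0
    obtain ⟨k', rfl⟩ : ∃ k', k = k' + 1 := ⟨k - 1, by omega⟩
    have hgd : DifferentiableOn ℝ g J := hg.differentiableOn (by exact_mod_cast Nat.succ_ne_zero m)
    have hWd : DifferentiableOn ℝ W J := hW.differentiableOn (by exact_mod_cast Nat.succ_ne_zero m)
    set g' := derivWithin g J with hg'def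
    set W' := derivWithin W J with hW'def
    have heq : Set.EqOn (derivWithin (fun t => g t ^ (k'+1) * W t) J)
        (fun t => g t ^ k' * (((k':ℂ)+1) * g' t * W t + g t * W' t)) J := by
      intro x hx
      have h1 : HasDerivWithinAt (fun y => g y ^ (k'+1))
          (((k':ℂ)+1) * g x ^ k' * g' x) J x :=
        hasDW_pow ((hgd x hx).hasDerivWithinAt) k'
      have h2 : HasDerivWithinAt W (W' x) J x := (hWd x hx).hasDerivWithinAt
      have h3 := (h1.fun_mul h2).derivWithin (hJuniq x hx)
      rw [h3, pow_succ]
      ring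
    rw [iteratedDerivWithin_succ', iteratedDerivWithin_congr heq ht₀]
    have hg'c : ContDiffOn ℝ (↑m) g' J := hg.derivWithin hJuniq (le_of_eq (by push_cast; ring))
    have hW'c : ContDiffOn ℝ (↑m) W' J := hW.derivWithin hJuniq (le_of_eq (by push_cast; ring))
    have hgm : ContDiffOn ℝ (↑m) g J := hg.of_le (nat_cast_le_wt (Nat.le_succ m))
    have hWm : ContDiffOn ℝ (↑m) W J := hW.of_le (nat_cast_le_wt (Nat.le_succ m))
    have hH : ContDiffOn ℝ (↑m) (fun t => ((k':ℂ)+1) * g' t * W t + g t * W' t) J :=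
      ((contDiffOn_const.mul hg'c).mul hWm).add (hgm.mul hW'c)
    exact IH k' g _ (by omega) hgm hH ht₀ hg0

private lemma idw_mul : ∀ (N : ℕ) (f g : ℝ → ℂ), ContDiffOn ℝ (↑N) f J → ContDiffOn ℝ (↑N) g J →
    ∀ {t : ℝ}, t ∈ J →
    iteratedDerivWithin N (fun y => f y * g y) J t =
      ∑ j ∈ Finset.range (N+1), (N.choose j : ℂ) * iteratedDerivWithin j f J t *
        iteratedDerivWithin (N - j) g J t := by
  intro N
  induction N with
  | zero => intro f g hf hg t ht; simp [iteratedDerivWithin_zero]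
  | succ N IH =>
    intro f g hf hg t ht
    have hfd : DifferentiableOn ℝ f J := hf.differentiableOn (by exact_mod_cast Nat.succ_ne_zero N)
    have hgd : DifferentiableOn ℝ g J := hg.differentiableOn (by exact_mod_cast Nat.succ_ne_zero N)
    set f' := derivWithin f J
    set g' := derivWithin g J
    have heq : Set.EqOn (derivWithin (fun y => f y * g y) J)
        (fun y => f' y * g y + f y * g' y) J := by
      intro x hx
      exact derivWithin_fun_mul (hfd x hx) (hgd x hx)
    have hf' : ContDiffOn ℝ (↑N) f' J := hf.derivWithin hJuniq (le_of_eq (by push_cast; ring))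
    have hg' : ContDiffOn ℝ (↑N) g' J := hg.derivWithin hJuniq (le_of_eq (by push_cast; ring))
    have hfN : ContDiffOn ℝ (↑N) f J := hf.of_le (nat_cast_le_wt (Nat.le_succ N))
    have hgN : ContDiffOn ℝ (↑N) g J := hg.of_le (nat_cast_le_wt (Nat.le_succ N))
    rw [iteratedDerivWithin_succ', iteratedDerivWithin_congr heq ht]
    have hadd : iteratedDerivWithin N (fun y => f' y * g y + f y * g' y) J t
        = iteratedDerivWithin N (fun y => f' y * g y) J t
          + iteratedDerivWithin N (fun y => f y * g' y) J t :=
      iteratedDerivWithin_add ht hJuniq ((hf'.mul hgN) t ht) ((hfN.mul hg') t ht)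
    rw [hadd, IH f' g hf' hgN ht, IH f g' hfN hg' ht]
    have hsucc : ∀ j : ℕ, iteratedDerivWithin j f' J t = iteratedDerivWithin (j+1) f J t :=
      fun j => (congrFun iteratedDerivWithin_succ' t).symm
    have hsuccg : ∀ j : ℕ, iteratedDerivWithin j g' J t = iteratedDerivWithin (j+1) g J t :=
      fun j => (congrFun iteratedDerivWithin_succ' t).symm
    simp only [hsucc, hsuccg]
    have conv2 : ∀ j ∈ range (N+1), (N.choose j : ℂ) * iteratedDerivWithin j f J t *
          iteratedDerivWithin (N-j+1) g J t
        = (N.choose j : ℂ) * iteratedDerivWithin j f J t *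
          iteratedDerivWithin (N+1-j) g J t := by
      intro j hj
      simp only [mem_range] at hj
      have e : N-j+1 = N+1-j := by omega
      rw [e]
    rw [Finset.sum_congr rfl conv2]
    exact leibniz_comb N (fun j => iteratedDerivWithin j f J t)
      (fun j => iteratedDerivWithin j g J t)

private lemma diamond (m l : ℕ) (hl : 1 ≤ l)
    (u w : ℝ → ℂ) (hu : ContDiffOn ℝ (↑m) u J) (hw : ContDiffOn ℝ (↑m) w J)
    {t₀ : ℝ} (ht₀ : t₀ ∈ J) (hc0 : u t₀ ≠ 0) :
    ∑ p ∈ range (m+1), (m.choose p : ℂ) * ((-1:ℂ)^p / ((p:ℂ) + l)) * ((u t₀)⁻¹)^(p+l) *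
        iteratedDerivWithin m (fun t => u t ^ (p+l) * w t) J t₀
      = (∑ p ∈ range (m+1), (m.choose p : ℂ) * ((-1:ℂ)^p / ((p:ℂ) + l))) *
        iteratedDerivWithin m w J t₀ := by
  set c := u t₀ with hcdef
  set δ : ℝ → ℂ := fun t => u t - c with hδdef
  have hδ : ContDiffOn ℝ (↑m) δ J := hu.sub contDiffOn_const
  have hδk : ∀ k : ℕ, ContDiffOn ℝ (↑m) (fun t => δ t ^ k * w t) J :=
    fun k => (hδ.pow k).mul hw
  set a : ℕ → ℂ := fun k => iteratedDerivWithin m (fun t => δ t ^ k * w t) J t₀ with hadef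
  have ha0 : a 0 = iteratedDerivWithin m w J t₀ := by
    simp only [hadef, pow_zero, one_mul]
  have havan : ∀ k, m < k → a k = 0 := fun k hk =>
    idw_vanish hJuniq m k δ w hk hδ hw ht₀ (by simp [hδdef]; exact sub_self _)
  have step1 : ∀ p : ℕ, iteratedDerivWithin m (fun t => u t ^ (p+l) * w t) J t₀
      = ∑ k ∈ range (p+l+1), ((p+l).choose k : ℂ) * c^(p+l-k) * a k := by
    intro p
    have funeq : (fun t => u t ^ (p+l) * w t)
        = fun t => ∑ k ∈ range (p+l+1), ((((p+l).choose k : ℂ)) * c^(p+l-k)) * (δ t ^ k * w t) := by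
      funext t
      have hut : u t = δ t + c := by simp [hδdef]
      rw [hut, add_pow, Finset.sum_mul]
      apply Finset.sum_congr rfl
      intro k hk
      push_cast
      ring
    rw [funeq, idw_sum hJuniq _ _ ht₀ (fun k _ => (contDiffOn_const.mul (hδk k)))]
    apply Finset.sum_congr rfl
    intro k hk
    have hsmul := iteratedDerivWithin_const_smul ht₀ hJuniq
      ((((p+l).choose k : ℂ)) * c^(p+l-k)) ((hδk k) t₀ ht₀)
    have : iteratedDerivWithin m (fun t => ((((p+l).choose k : ℂ)) * c^(p+l-k)) * (δ t ^ k * w t)) J t₀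
        = ((((p+l).choose k : ℂ)) * c^(p+l-k)) * a k := by
      simpa [smul_eq_mul, Pi.smul_def, hadef] using hsmul
    rw [this]
  have cancel : ∀ p k : ℕ, k ≤ p + l → (c⁻¹)^(p+l) * c^(p+l-k) = (c⁻¹)^k := by
    intro p k hk
    have hck : c^(p+l-k) * c^k = c^(p+l) := by rw [← pow_add]; congr 1; omega
    rw [inv_pow, inv_pow]
    field_simp
    linear_combination hck
  have step2 : ∀ p ∈ range (m+1),
      (m.choose p : ℂ) * ((-1:ℂ)^p / ((p:ℂ) + l)) * ((u t₀)⁻¹)^(p+l) *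
        iteratedDerivWithin m (fun t => u t ^ (p+l) * w t) J t₀
      = ∑ k ∈ range (m+l+1), (m.choose p : ℂ) * ((-1:ℂ)^p / ((p:ℂ) + l)) *
          ((p+l).choose k : ℂ) * (c⁻¹)^k * a k := by
    intro p hp
    simp only [mem_range] at hp
    rw [step1 p, Finset.mul_sum]
    have inner : ∀ k ∈ range (p+l+1),
        (m.choose p : ℂ) * ((-1:ℂ)^p / ((p:ℂ) + l)) * ((u t₀)⁻¹)^(p+l) *
          (((p+l).choose k : ℂ) * c^(p+l-k) * a k)
        = (m.choose p : ℂ) * ((-1:ℂ)^p / ((p:ℂ) + l)) * ((p+l).choose k : ℂ) * (c⁻¹)^k * a k := by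
      intro k hk
      simp only [mem_range] at hk
      have hcc := cancel p k (by omega)
      calc (m.choose p : ℂ) * ((-1:ℂ)^p / ((p:ℂ) + l)) * (c⁻¹)^(p+l) *
          (((p+l).choose k : ℂ) * c^(p+l-k) * a k)
          = (m.choose p : ℂ) * ((-1:ℂ)^p / ((p:ℂ) + l)) * ((p+l).choose k : ℂ) *
            ((c⁻¹)^(p+l) * c^(p+l-k)) * a k := by ring
        _ = _ := by rw [hcc]
    rw [Finset.sum_congr rfl inner]
    apply Finset.sum_subset (Finset.range_subset_range.mpr (by omega : p+l+1 ≤ m+l+1))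
    intro k hk1 hk2
    simp only [mem_range] at hk1 hk2
    have hz : (p+l).choose k = 0 := Nat.choose_eq_zero_of_lt (by omega)
    rw [hz]
    push_cast
    ring
  rw [Finset.sum_congr rfl step2, Finset.sum_comm]
  rw [Finset.sum_eq_single_of_mem 0 (by simp)]
  · simp only [Nat.choose_zero_right, Nat.cast_one, pow_zero, ha0]
    rw [← Finset.sum_mul]
    apply congrArg (· * iteratedDerivWithin m w J t₀)
    apply Finset.sum_congr rfl
    intro p _
    ring
  · intro k hk hk0
    by_cases hkm : k ≤ m
    · have hsum : ∑ p ∈ range (m+1), (m.choose p : ℂ) * ((-1:ℂ)^p / ((p:ℂ) + l)) *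
            ((p+l).choose k : ℂ) * (c⁻¹)^k * a k
          = ((c⁻¹)^k * a k) * ∑ p ∈ range (m+1), (m.choose p : ℂ) * ((-1:ℂ)^p / ((p:ℂ) + l)) *
            ((p+l).choose k : ℂ) := by
        rw [Finset.mul_sum]
        apply Finset.sum_congr rfl
        intro p _
        ring
      rw [hsum, keyC m l k hl (by omega) hkm, mul_zero]
    · have hak : a k = 0 := havan k (by omega)
      apply Finset.sum_eq_zero
      intro p _
      rw [hak]
      ring

end helpers

theorem stmt3 (J : Set ℝ) (hJconn : J.OrdConnected) (hJuniq : UniqueDiffOn ℝ J)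
    (n : ℕ) (l : ℕ) (hl : 1 ≤ l) (u v w : ℝ → ℂ)
    (hu : ContDiffOn ℝ n u J) (hv : ContDiffOn ℝ n v J) (hw : ContDiffOn ℝ n w J)
    (hu0 : ∀ t ∈ J, u t ≠ 0) :
    ∀ t ∈ J,
      (∑ p ∈ Finset.range (n + 1), (n.choose p : ℂ) * ((-1 : ℂ) ^ p / ((p : ℂ) + l)) *
        (u⁻¹ ^ (p + l)) t *
        iteratedDerivWithin (n - p) (v * iteratedDerivWithin p (u ^ (p + l) * w) J) J t) =
      ∑ p ∈ Finset.range (n + 1), (n.choose p : ℂ) * ((-1 : ℂ) ^ p / ((p : ℂ) + l)) *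
        iteratedDerivWithin (n - p) (v * iteratedDerivWithin p w J) J t := by
  intro t₀ ht₀
  set V : ℕ → ℂ := fun j => iteratedDerivWithin j v J t₀ with hV
  set Wd : ℕ → ℂ := fun q => iteratedDerivWithin q w J t₀ with hWdd
  set G : ℕ → ℕ → ℂ := fun q p => iteratedDerivWithin q (fun t => u t ^ (p+l) * w t) J t₀ with hG
  have hupw : ∀ p : ℕ, ContDiffOn ℝ (↑n) (fun t => u t ^ (p+l) * w t) J :=
    fun p => (hu.pow _).mul hw
  have hL : ∀ p ∈ range (n+1),
      iteratedDerivWithin (n-p) (v * iteratedDerivWithin p (u ^ (p + l) * w) J) J t₀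
        = ∑ j ∈ range (n+1), ((n-p).choose j : ℂ) * V j * G (n-j) p := by
    intro p hp
    simp only [mem_range] at hp
    have hgp : ContDiffOn ℝ (↑(n-p)) (iteratedDerivWithin p (u ^ (p+l) * w) J) J := by
      apply cdo_idw hJuniq p
      have e : n - p + p = n := by omega
      rw [e]
      exact hupw p
    have hvp : ContDiffOn ℝ (↑(n-p)) v J := hv.of_le (nat_cast_le_wt (by omega))
    have hmul := idw_mul hJuniq (n-p) v (iteratedDerivWithin p (u ^ (p+l) * w) J) hvp hgp ht₀
    rw [show (v * iteratedDerivWithin p (u ^ (p+l) * w) J)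
        = (fun y => v y * iteratedDerivWithin p (u ^ (p+l) * w) J y) from rfl, hmul]
    have inner : ∀ j ∈ range (n-p+1),
        ((n-p).choose j : ℂ) * iteratedDerivWithin j v J t₀ *
          iteratedDerivWithin ((n-p)-j) (iteratedDerivWithin p (u^(p+l)*w) J) J t₀
        = ((n-p).choose j : ℂ) * V j * G (n-j) p := by
      intro j hj
      simp only [mem_range] at hj
      rw [idw_idw hJuniq p ((n-p)-j) _ ht₀]
      have e : (n-p)-j+p = n-j := by omega
      rw [e]
      rfl
    rw [Finset.sum_congr rfl inner]
    apply Finset.sum_subset (Finset.range_subset_range.mpr (by omega : n-p+1 ≤ n+1))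
    intro j hj1 hj2
    simp only [mem_range] at hj1 hj2
    rw [Nat.choose_eq_zero_of_lt (by omega : n-p < j)]
    push_cast
    ring
  have hR : ∀ p ∈ range (n+1),
      iteratedDerivWithin (n-p) (v * iteratedDerivWithin p w J) J t₀
        = ∑ j ∈ range (n+1), ((n-p).choose j : ℂ) * V j * Wd (n-j) := by
    intro p hp
    simp only [mem_range] at hp
    have hgp : ContDiffOn ℝ (↑(n-p)) (iteratedDerivWithin p w J) J := by
      apply cdo_idw hJuniq p
      have e : n - p + p = n := by omega
      rw [e]
      exact hw
    have hvp : ContDiffOn ℝ (↑(n-p)) v J := hv.of_le (nat_cast_le_wt (by omega))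
    have hmul := idw_mul hJuniq (n-p) v (iteratedDerivWithin p w J) hvp hgp ht₀
    rw [show (v * iteratedDerivWithin p w J)
        = (fun y => v y * iteratedDerivWithin p w J y) from rfl, hmul]
    have inner : ∀ j ∈ range (n-p+1),
        ((n-p).choose j : ℂ) * iteratedDerivWithin j v J t₀ *
          iteratedDerivWithin ((n-p)-j) (iteratedDerivWithin p w J) J t₀
        = ((n-p).choose j : ℂ) * V j * Wd (n-j) := by
      intro j hj
      simp only [mem_range] at hj
      rw [idw_idw hJuniq p ((n-p)-j) _ ht₀]
      have e : (n-p)-j+p = n-j := by omega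
      rw [e]
    rw [Finset.sum_congr rfl inner]
    apply Finset.sum_subset (Finset.range_subset_range.mpr (by omega : n-p+1 ≤ n+1))
    intro j hj1 hj2
    simp only [mem_range] at hj1 hj2
    rw [Nat.choose_eq_zero_of_lt (by omega : n-p < j)]
    push_cast
    ring
  have key : ∀ j : ℕ, j ≤ n →
      (∑ p ∈ range (n-j+1), ((n-j).choose p : ℂ) * ((-1:ℂ)^p / ((p:ℂ)+l)) *
        ((u t₀)⁻¹)^(p+l) * G (n-j) p)
      = (∑ p ∈ range (n-j+1), ((n-j).choose p : ℂ) * ((-1:ℂ)^p / ((p:ℂ)+l))) * Wd (n-j) := by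
    intro j hj
    exact diamond hJuniq (n-j) l hl u w (hu.of_le (nat_cast_le_wt (by omega)))
      (hw.of_le (nat_cast_le_wt (by omega))) ht₀ (hu0 t₀ ht₀)
  have hLHS : (∑ p ∈ Finset.range (n + 1), (n.choose p : ℂ) * ((-1 : ℂ) ^ p / ((p : ℂ) + l)) *
        (u⁻¹ ^ (p + l)) t₀ *
        iteratedDerivWithin (n - p) (v * iteratedDerivWithin p (u ^ (p + l) * w) J) J t₀)
      = ∑ j ∈ range (n+1), (n.choose j : ℂ) * V j *
          ((∑ p ∈ range (n-j+1), ((n-j).choose p : ℂ) * ((-1:ℂ)^p / ((p:ℂ)+l))) * Wd (n-j)) := by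
    have s1 : ∀ p ∈ range (n+1),
        (n.choose p : ℂ) * ((-1 : ℂ) ^ p / ((p : ℂ) + l)) * (u⁻¹ ^ (p + l)) t₀ *
          iteratedDerivWithin (n - p) (v * iteratedDerivWithin p (u ^ (p + l) * w) J) J t₀
        = ∑ j ∈ range (n+1), (n.choose p : ℂ) * ((-1:ℂ)^p / ((p:ℂ)+l)) * ((u t₀)⁻¹)^(p+l) *
            (((n-p).choose j : ℂ) * V j * G (n-j) p) := by
      intro p hp
      rw [hL p hp, Finset.mul_sum]
      rfl
    rw [Finset.sum_congr rfl s1, Finset.sum_comm]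
    apply Finset.sum_congr rfl
    intro j hj
    simp only [mem_range] at hj
    have hswap : ∀ p ∈ range (n+1),
        (n.choose p : ℂ) * ((-1:ℂ)^p / ((p:ℂ)+l)) * ((u t₀)⁻¹)^(p+l) *
          (((n-p).choose j : ℂ) * V j * G (n-j) p)
        = (n.choose j : ℂ) * V j * (((n-j).choose p : ℂ) * ((-1:ℂ)^p / ((p:ℂ)+l)) *
            ((u t₀)⁻¹)^(p+l) * G (n-j) p) := by
      intro p hp
      simp only [mem_range] at hp
      have hcs : n.choose p * (n-p).choose j = n.choose j * (n-j).choose p :=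
        choose_swap (by omega) (by omega)
      have hcsC : (n.choose p : ℂ) * ((n-p).choose j : ℂ)
          = (n.choose j : ℂ) * ((n-j).choose p : ℂ) := by exact_mod_cast hcs
      linear_combination (((-1:ℂ)^p / ((p:ℂ)+l)) * ((u t₀)⁻¹)^(p+l) * V j * G (n-j) p) * hcsC
    rw [Finset.sum_congr rfl hswap, ← Finset.mul_sum]
    congr 1
    rw [← key j (by omega)]
    symm
    apply Finset.sum_subset (Finset.range_subset_range.mpr (by omega : n-j+1 ≤ n+1))
    intro p hp1 hp2
    simp only [mem_range] at hp1 hp2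
    rw [Nat.choose_eq_zero_of_lt (by omega : n-j < p)]
    push_cast
    ring
  have hRHS : (∑ p ∈ Finset.range (n + 1), (n.choose p : ℂ) * ((-1 : ℂ) ^ p / ((p : ℂ) + l)) *
        iteratedDerivWithin (n - p) (v * iteratedDerivWithin p w J) J t₀)
      = ∑ j ∈ range (n+1), (n.choose j : ℂ) * V j *
          ((∑ p ∈ range (n-j+1), ((n-j).choose p : ℂ) * ((-1:ℂ)^p / ((p:ℂ)+l))) * Wd (n-j)) := by
    have s1 : ∀ p ∈ range (n+1),
        (n.choose p : ℂ) * ((-1 : ℂ) ^ p / ((p : ℂ) + l)) *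
          iteratedDerivWithin (n - p) (v * iteratedDerivWithin p w J) J t₀
        = ∑ j ∈ range (n+1), (n.choose p : ℂ) * ((-1:ℂ)^p / ((p:ℂ)+l)) *
            (((n-p).choose j : ℂ) * V j * Wd (n-j)) := by
      intro p hp
      rw [hR p hp, Finset.mul_sum]
    rw [Finset.sum_congr rfl s1, Finset.sum_comm]
    apply Finset.sum_congr rfl
    intro j hj
    simp only [mem_range] at hj
    have hswap : ∀ p ∈ range (n+1),
        (n.choose p : ℂ) * ((-1:ℂ)^p / ((p:ℂ)+l)) * (((n-p).choose j : ℂ) * V j * Wd (n-j))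
        = (n.choose j : ℂ) * V j * (((n-j).choose p : ℂ) * ((-1:ℂ)^p / ((p:ℂ)+l)) * Wd (n-j)) := by
      intro p hp
      simp only [mem_range] at hp
      have hcs : n.choose p * (n-p).choose j = n.choose j * (n-j).choose p :=
        choose_swap (by omega) (by omega)
      have hcsC : (n.choose p : ℂ) * ((n-p).choose j : ℂ)
          = (n.choose j : ℂ) * ((n-j).choose p : ℂ) := by exact_mod_cast hcs
      linear_combination (((-1:ℂ)^p / ((p:ℂ)+l)) * V j * Wd (n-j)) * hcsC
    rw [Finset.sum_congr rfl hswap, ← Finset.mul_sum]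
    congr 1
    rw [Finset.sum_mul]
    symm
    apply Finset.sum_subset (Finset.range_subset_range.mpr (by omega : n-j+1 ≤ n+1))
    intro p hp1 hp2
    simp only [mem_range] at hp1 hp2
    rw [Nat.choose_eq_zero_of_lt (by omega : n-j < p)]
    push_cast
    ring
  exact hLHS.trans hRHS.symm
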